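/- For every n ≥ 0, the inclusion (∂Δ[n] × Δ[1]) ∪ (Δ[n] × {1}) → Δ[n] × Δ[1] is a finite composition of pushouts of horn inclusions of the form Λ^k[n+1] → Δ[n+1] with 0 < k ≤ n+1; in particular, it is a right anodyne extension, i.e. it belongs to the smallest class of morphisms of simplicial sets containing the horn inclusions Λ^k[m] → Δ[m] (m ≥ 1, 0 < k ≤ m) and closed under pushouts, transfinite compositions and retracts. -/

import Mathlib

open CategoryTheory CategoryTheory.Limits Simplicial MonoidalCategory SSet

universe u

/-- A morphism `f` is a retract of a morphism `g` in the arrow category. -/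
def RetractArrow {A B X Y : SSet.{u}} (f : A ⟶ B) (g : X ⟶ Y) : Prop :=
  ∃ (s : Arrow.mk f ⟶ Arrow.mk g) (r : Arrow.mk g ⟶ Arrow.mk f), s ≫ r = 𝟙 _

/-- The inclusion functor of the subset `{i | i < j}` of a preorder `J` into `J`. -/
def iioFunctor {J : Type} [Preorder J] (j : J) : Set.Iio j ⥤ J where
  obj i := i.1
  map φ := homOfLE (leOfHom φ)

/-- The cocone on the restriction of a functor `F : J ⥤ SSet` to `{i | i < j}`,
with apex `F.obj j`; asking it to be colimiting expresses that `F` is continuous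
at the limit element `j`. -/
def coconeAt {J : Type} [Preorder J] (F : J ⥤ SSet.{u}) (j : J) :
    Cocone (iioFunctor j ⋙ F) where
  pt := F.obj j
  ι :=
    { app := fun i => F.map (homOfLE i.2.le)
      naturality := fun i i' φ => by
        dsimp [iioFunctor]
        rw [Category.comp_id, ← F.map_comp]
        rfl }

/-- A class of morphisms of simplicial sets is weakly saturated if it is closed under
pushouts, retracts and transfinite compositions. -/
structure IsWeaklySaturated (W : MorphismProperty SSet.{u}) : Prop where
  pushout : ∀ {A B X Y : SSet.{u}} {t : A ⟶ X} {f : A ⟶ B} {g : X ⟶ Y} {b : B ⟶ Y},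
      IsPushout t f g b → W f → W g
  retract : ∀ {A B X Y : SSet.{u}} {f : A ⟶ B} {g : X ⟶ Y},
      _root_.RetractArrow f g → W g → W f
  transfinite : ∀ (J : Type) [LinearOrder J] [OrderBot J] [SuccOrder J] [WellFoundedLT J]
      (F : J ⥤ SSet.{u}),
      (∀ j : J, ¬ IsMax j → W (F.map (homOfLE (Order.le_succ j)))) →
      (∀ j : J, Order.IsSuccLimit j → Nonempty (IsColimit (coconeAt F j))) →
      ∀ (c : Cocone F), IsColimit c → W (c.ι.app ⊥)

/-- The class of right horn inclusions `Λ[m, k] → Δ[m]`, `m ≥ 1`, `0 < k ≤ m`. -/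
def RightHornIncls : MorphismProperty SSet.{u} := fun _ _ f =>
  ∃ (m : ℕ) (k : Fin (m + 1)), 0 < (k : ℕ) ∧ (k : ℕ) ≤ m ∧ Arrow.mk f = Arrow.mk (SSet.horn m k).ι

/-- A right anodyne extension: a morphism belonging to the smallest class of morphisms of
simplicial sets containing the right horn inclusions and closed under pushouts,
transfinite compositions and retracts. -/
def RightAnodyne {A B : SSet.{u}} (f : A ⟶ B) : Prop :=
  ∀ W : MorphismProperty SSet.{u}, IsWeaklySaturated W →
    (∀ {X Y : SSet.{u}} (g : X ⟶ Y), RightHornIncls g → W g) → W f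

/-- `f` is a pushout of some morphism belonging to the class `S`. -/
def IsPushoutOfMem (S : MorphismProperty SSet.{u}) {A B : SSet.{u}} (f : A ⟶ B) : Prop :=
  ∃ (X Y : SSet.{u}) (g : X ⟶ Y) (t : X ⟶ A) (b : Y ⟶ B), S g ∧ IsPushout t g f b

/-- Finite (nonempty) compositions of pushouts of morphisms belonging to `S`. -/
inductive FiniteCompOfPushouts (S : MorphismProperty SSet.{u}) :
    ∀ {A B : SSet.{u}}, (A ⟶ B) → Prop
| of {A B : SSet.{u}} (f : A ⟶ B) : IsPushoutOfMem S f → FiniteCompOfPushouts S f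
| comp {A B C : SSet.{u}} (f : A ⟶ B) (g : B ⟶ C) :
      FiniteCompOfPushouts S f → IsPushoutOfMem S g → FiniteCompOfPushouts S (f ≫ g)

/-- The vertex `e` of `Δ[1]`, as a morphism `Δ[0] ⟶ Δ[1]`. -/
def vertexMap (e : Fin 2) : (Δ[0] : SSet.{u}) ⟶ Δ[1] :=
  SSet.stdSimplex.map (SimplexCategory.const _ _ e)

/-- The union `(∂Δ[n] × Δ[1]) ∪ (Δ[n] × {e})` inside `Δ[n] × Δ[1]`, i.e. the pushout
of `∂Δ[n] × Δ[1]` and `Δ[n] × {e}` over `∂Δ[n] × {e}`. -/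
noncomputable def boundaryCorner (n : ℕ) (e : Fin 2) : SSet.{u} :=
  pushout ((∂Δ[n] : SSet.{u}) ◁ vertexMap e) ((boundary n).ι ▷ Δ[0])

/-- The inclusion `(∂Δ[n] × Δ[1]) ∪ (Δ[n] × {e}) → Δ[n] × Δ[1]`. -/
noncomputable def boundaryCornerIncl (n : ℕ) (e : Fin 2) :
    boundaryCorner.{u} n e ⟶ Δ[n] ⊗ Δ[1] :=
  pushout.desc ((boundary n).ι ▷ Δ[1]) (Δ[n] ◁ vertexMap e)
    (whisker_exchange (boundary n).ι (vertexMap e))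

noncomputable section
namespace BCPrism

/-- Two simplices of a standard simplex are equal iff their order homs agree. -/
lemma deltaEq {q : ℕ} {m : SimplexCategoryᵒᵖ} (a b : (Δ[q] : SSet.{u}).obj m)
    (h : ∀ i, stdSimplex.asOrderHom a i = stdSimplex.asOrderHom b i) : a = b := by
  cases a; cases b
  congr 1
  exact SimplexCategory.Hom.ext _ _ (OrderHom.ext _ _ (funext h))

abbrev prism (n : ℕ) : SSet.{u} := Δ[n] ⊗ Δ[1]

/-- `x` "factors through `σ_i`". -/
def Fac (n i : ℕ) {m : SimplexCategoryᵒᵖ} (x : (prism.{u} n).obj m) : Prop :=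
  ∀ a, ((stdSimplex.asOrderHom x.2 a).1 = 0 → (stdSimplex.asOrderHom x.1 a).1 ≤ i) ∧
    ((stdSimplex.asOrderHom x.2 a).1 = 1 → i ≤ (stdSimplex.asOrderHom x.1 a).1)

/-- Membership in the `k`-th stage of the filtration of `Δ[n] × Δ[1]` starting from
`(∂Δ[n] × Δ[1]) ∪ (Δ[n] × {1})`. -/
def InCorner (n k : ℕ) {m : SimplexCategoryᵒᵖ} (x : (prism.{u} n).obj m) : Prop :=
  ¬Function.Surjective (stdSimplex.asOrderHom x.1) ∨ (∀ a, (stdSimplex.asOrderHom x.2 a).1 = 1) ∨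
    ∃ i : ℕ, i < k ∧ i ≤ n ∧ Fac n i x

lemma inCorner_mono {n k k' : ℕ} (hk : k ≤ k') {m : SimplexCategoryᵒᵖ}
    {x : (prism.{u} n).obj m} (h : InCorner n k x) : InCorner n k' x := by
  obtain h | h | ⟨i, h1, h2, h3⟩ := h
  · exact Or.inl h
  · exact Or.inr (Or.inl h)
  · exact Or.inr (Or.inr ⟨i, lt_of_lt_of_le h1 hk, h2, h3⟩)

lemma inCorner_map {n k : ℕ} {m m' : SimplexCategoryᵒᵖ} (φ : m ⟶ m')
    {x : (prism.{u} n).obj m} (h : InCorner n k x) :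
    InCorner n k ((prism.{u} n).map φ x) := by
  obtain h | h | ⟨i, h1, h2, h3⟩ := h
  · refine Or.inl fun hs => h fun b => ?_
    obtain ⟨a, ha⟩ := hs b
    exact ⟨φ.unop.toOrderHom a, ha⟩
  · exact Or.inr (Or.inl fun a => h _)
  · exact Or.inr (Or.inr ⟨i, h1, h2, fun a => h3 _⟩)

/-- The stages of the filtration, as simplicial sets. -/
def cornerSet (n k : ℕ) : SSet.{u} where
  obj m := { x : (prism.{u} n).obj m // InCorner n k x }
  map φ := TypeCat.ofHom fun x => ⟨(prism.{u} n).map φ x.1, inCorner_map φ x.2⟩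
  map_id m := by
    ext x
    exact types_congr_hom ((prism.{u} n).map_id m) x.1
  map_comp φ ψ := by
    ext x
    exact types_congr_hom ((prism.{u} n).map_comp φ ψ) x.1

def cornerIncl (n k : ℕ) : cornerSet.{u} n k ⟶ prism.{u} n where
  app m := TypeCat.ofHom fun x => x.1

def chain (n : ℕ) {k k' : ℕ} (h : k ≤ k') : cornerSet.{u} n k ⟶ cornerSet.{u} n k' where
  app m := TypeCat.ofHom fun x => ⟨x.1, inCorner_mono h x.2⟩

lemma chain_chain (n : ℕ) {k k' k'' : ℕ} (h : k ≤ k') (h' : k' ≤ k'') :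
    chain.{u} n h ≫ chain.{u} n h' = chain.{u} n (h.trans h') := rfl

lemma chain_incl (n : ℕ) {k k' : ℕ} (h : k ≤ k') :
    chain.{u} n h ≫ cornerIncl.{u} n k' = cornerIncl.{u} n k := rfl

/-- first component of `σ_k : Δ[n+1] → Δ[n] × Δ[1]`, as an order hom. -/
def sOrd (n : ℕ) (k : Fin (n + 1)) : Fin (n + 2) →o Fin (n + 1) where
  toFun j := if h : k.1 < j.1 then ⟨j.1 - 1, by omega⟩ else ⟨j.1, by have := k.2; omega⟩
  monotone' a b hab := by
    have : a.1 ≤ b.1 := hab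
    dsimp only
    split_ifs <;> simp only [Fin.mk_le_mk] <;> omega

/-- second component of `σ_k : Δ[n+1] → Δ[n] × Δ[1]`, as an order hom. -/
def tOrd (n : ℕ) (k : Fin (n + 1)) : Fin (n + 2) →o Fin 2 where
  toFun j := if j.1 ≤ k.1 then ⟨0, by omega⟩ else ⟨1, by omega⟩
  monotone' a b hab := by
    have : a.1 ≤ b.1 := hab
    dsimp only
    split_ifs <;> simp only [Fin.mk_le_mk] <;> omega

lemma sOrd_val (n : ℕ) (k : Fin (n + 1)) (j : Fin (n + 2)) :
    (sOrd n k j).1 = if k.1 < j.1 then j.1 - 1 else j.1 := by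
  show Fin.val (dite (k.1 < j.1) _ _) = _
  split <;> rfl

lemma tOrd_val (n : ℕ) (k : Fin (n + 1)) (j : Fin (n + 2)) :
    (tOrd n k j).1 = if j.1 ≤ k.1 then 0 else 1 := by
  show Fin.val (ite (j.1 ≤ k.1) _ _) = _
  split <;> rfl

def sigmaApp (n : ℕ) (k : Fin (n + 1)) (m : SimplexCategoryᵒᵖ) (h : (Δ[n+1] : SSet.{u}).obj m) :
    (prism.{u} n).obj m :=
  (stdSimplex.objMk ((sOrd n k).comp (stdSimplex.asOrderHom h)),
   stdSimplex.objMk ((tOrd n k).comp (stdSimplex.asOrderHom h)))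

lemma sigmaApp_fst (n : ℕ) (k : Fin (n + 1)) (m : SimplexCategoryᵒᵖ)
    (h : (Δ[n+1] : SSet.{u}).obj m) (a) :
    stdSimplex.asOrderHom (sigmaApp.{u} n k m h).1 a = sOrd n k (stdSimplex.asOrderHom h a) := rfl

lemma sigmaApp_snd (n : ℕ) (k : Fin (n + 1)) (m : SimplexCategoryᵒᵖ)
    (h : (Δ[n+1] : SSet.{u}).obj m) (a) :
    stdSimplex.asOrderHom (sigmaApp.{u} n k m h).2 a = tOrd n k (stdSimplex.asOrderHom h a) := rfl

def sigmaMap (n : ℕ) (k : Fin (n + 1)) : (Δ[n+1] : SSet.{u}) ⟶ prism.{u} n where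
  app m := TypeCat.ofHom fun h => sigmaApp.{u} n k m h
  naturality m m' φ := by
    ext h
    refine Prod.ext (deltaEq _ _ fun i => rfl) (deltaEq _ _ fun i => rfl)


section Combinatorics

variable {n : ℕ}

lemma gval2 {m : SimplexCategoryᵒᵖ} (x : (prism.{u} n).obj m) (a) :
    (stdSimplex.asOrderHom x.2 a).1 = 0 ∨ (stdSimplex.asOrderHom x.2 a).1 = 1 := by
  have := (stdSimplex.asOrderHom x.2 a).2; omega

lemma fac_iff_exists (k : Fin (n + 1)) (m : SimplexCategoryᵒᵖ) (x : (prism.{u} n).obj m) :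
    Fac n k.1 x ↔ ∃ h, sigmaApp.{u} n k m h = x := by
  constructor
  · intro hf
    classical
    have hb1 : ∀ a, (stdSimplex.asOrderHom x.1 a).1 < n + 2 := fun a => by
      have := (stdSimplex.asOrderHom x.1 a).2; omega
    have hb2 : ∀ a, (stdSimplex.asOrderHom x.1 a).1 + 1 < n + 2 := fun a => by
      have := (stdSimplex.asOrderHom x.1 a).2; omega
    set Hfun : Fin (m.unop.len + 1) → Fin (n + 2) := fun a =>
      if (stdSimplex.asOrderHom x.2 a).1 = 0 then ⟨(stdSimplex.asOrderHom x.1 a).1, hb1 a⟩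
      else ⟨(stdSimplex.asOrderHom x.1 a).1 + 1, hb2 a⟩ with hHdef
    have hHval : ∀ a, (Hfun a).1 =
        if (stdSimplex.asOrderHom x.2 a).1 = 0 then (stdSimplex.asOrderHom x.1 a).1 else (stdSimplex.asOrderHom x.1 a).1 + 1 := by
      intro a
      rw [hHdef]
      rw [apply_ite Fin.val]
    have hmono : Monotone Hfun := by
      intro a b hab
      have hf'' : (stdSimplex.asOrderHom x.1 a).1 ≤ (stdSimplex.asOrderHom x.1 b).1 := (stdSimplex.asOrderHom x.1).monotone hab
      have hg'' : (stdSimplex.asOrderHom x.2 a).1 ≤ (stdSimplex.asOrderHom x.2 b).1 := (stdSimplex.asOrderHom x.2).monotone hab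
      have h2a := (stdSimplex.asOrderHom x.2 a).2
      have h2b := (stdSimplex.asOrderHom x.2 b).2
      rw [Fin.le_def, hHval, hHval]
      split_ifs <;> omega
    refine ⟨stdSimplex.objMk ⟨Hfun, hmono⟩, ?_⟩
    have hka := k.2
    refine Prod.ext (deltaEq _ _ fun a => Fin.ext ?_) (deltaEq _ _ fun a => Fin.ext ?_)
    · have e1 : (stdSimplex.asOrderHom (sigmaApp.{u} n k m (stdSimplex.objMk ⟨Hfun, hmono⟩)).1 a).1
          = (sOrd n k (Hfun a)).1 := rfl
      rw [e1, sOrd_val, hHval]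
      rcases gval2 x a with hg | hg
      · have hfa := (hf a).1 hg
        simp only [hg, if_pos rfl, if_true]
        split_ifs <;> omega
      · have hne : ¬ ((stdSimplex.asOrderHom x.2 a).1 = 0) := by omega
        have hfa := (hf a).2 hg
        simp only [hne, if_false]
        split_ifs <;> omega
    · have e1 : (stdSimplex.asOrderHom (sigmaApp.{u} n k m (stdSimplex.objMk ⟨Hfun, hmono⟩)).2 a).1
          = (tOrd n k (Hfun a)).1 := rfl
      rw [e1, tOrd_val, hHval]
      rcases gval2 x a with hg | hg
      · have hfa := (hf a).1 hg
        simp only [hg, if_pos rfl, if_true]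
        split_ifs <;> omega
      · have hne : ¬ ((stdSimplex.asOrderHom x.2 a).1 = 0) := by omega
        have hfa := (hf a).2 hg
        simp only [hne, if_false]
        split_ifs <;> omega
  · rintro ⟨h, rfl⟩
    intro a
    have h2 := (stdSimplex.asOrderHom h a).2
    constructor
    · intro hg
      rw [sigmaApp_snd, tOrd_val] at hg
      rw [sigmaApp_fst, sOrd_val]
      split_ifs at hg ⊢ <;> omega
    · intro hg
      rw [sigmaApp_snd, tOrd_val] at hg
      rw [sigmaApp_fst, sOrd_val]
      split_ifs at hg ⊢ <;> omega

lemma sigma_inj (k : Fin (n + 1)) (m : SimplexCategoryᵒᵖ) (h h' : (Δ[n+1] : SSet.{u}).obj m)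
    (e : sigmaApp.{u} n k m h = sigmaApp.{u} n k m h') : h = h' := by
  apply deltaEq
  intro a
  have e1 : (sOrd n k (stdSimplex.asOrderHom h a)).1 = (sOrd n k (stdSimplex.asOrderHom h' a)).1 := by
    rw [← sigmaApp_fst, ← sigmaApp_fst, e]
  have e2 : (tOrd n k (stdSimplex.asOrderHom h a)).1 = (tOrd n k (stdSimplex.asOrderHom h' a)).1 := by
    rw [← sigmaApp_snd, ← sigmaApp_snd, e]
  rw [sOrd_val, sOrd_val] at e1
  rw [tOrd_val, tOrd_val] at e2
  have := (stdSimplex.asOrderHom h a).2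
  have := (stdSimplex.asOrderHom h' a).2
  apply Fin.ext
  split_ifs at e1 e2 <;> omega

lemma inCorner_top (m : SimplexCategoryᵒᵖ) (x : (prism.{u} n).obj m) :
    InCorner n (n + 1) x := by
  by_cases hg : ∀ a, (stdSimplex.asOrderHom x.2 a).1 = 1
  · exact Or.inr (Or.inl hg)
  by_cases hs : Function.Surjective (stdSimplex.asOrderHom x.1)
  · push_neg at hg
    obtain ⟨a₀, ha₀⟩ := hg
    have ha₀' : (stdSimplex.asOrderHom x.2 a₀).1 = 0 := by rcases gval2 x a₀ with h|h <;> omega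
    classical
    have hne : (Finset.univ.filter (fun a => (stdSimplex.asOrderHom x.2 a).1 = 0)).Nonempty :=
      ⟨a₀, Finset.mem_filter.2 ⟨Finset.mem_univ _, ha₀'⟩⟩
    set a₁ := (Finset.univ.filter (fun a => (stdSimplex.asOrderHom x.2 a).1 = 0)).max' hne with ha₁
    have ha₁mem : (stdSimplex.asOrderHom x.2 a₁).1 = 0 := by
      have := Finset.max'_mem _ hne
      rw [← ha₁] at this
      simpa using this
    refine Or.inr (Or.inr ⟨(stdSimplex.asOrderHom x.1 a₁).1, by have := (stdSimplex.asOrderHom x.1 a₁).2; omega,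
      by have := (stdSimplex.asOrderHom x.1 a₁).2; omega, fun a => ⟨fun hg0 => ?_, fun hg1 => ?_⟩⟩)
    · have hle : a ≤ a₁ := Finset.le_max' _ a (Finset.mem_filter.2 ⟨Finset.mem_univ _, hg0⟩)
      exact (stdSimplex.asOrderHom x.1).monotone hle
    · rcases le_total a a₁ with hle | hle
      · have : (stdSimplex.asOrderHom x.2 a).1 ≤ (stdSimplex.asOrderHom x.2 a₁).1 := (stdSimplex.asOrderHom x.2).monotone hle
        omega
      · exact (stdSimplex.asOrderHom x.1).monotone hle
  · exact Or.inl hs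

lemma inCorner_succ (k : Fin (n + 1)) (m : SimplexCategoryᵒᵖ) (x : (prism.{u} n).obj m) :
    InCorner n (k.1 + 1) x ↔ InCorner n k.1 x ∨ ∃ h, sigmaApp.{u} n k m h = x := by
  constructor
  · rintro (h | h | ⟨i, h1, h2, h3⟩)
    · exact Or.inl (Or.inl h)
    · exact Or.inl (Or.inr (Or.inl h))
    · rcases Nat.lt_or_ge i k.1 with hik | hik
      · exact Or.inl (Or.inr (Or.inr ⟨i, hik, h2, h3⟩))
      · have : i = k.1 := by omega
        subst this
        exact Or.inr ((fac_iff_exists k m x).1 h3)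
  · rintro (h | h)
    · exact inCorner_mono (Nat.le_succ _) h
    · exact Or.inr (Or.inr ⟨k.1, Nat.lt_succ_self _, by have := k.2; omega,
        (fac_iff_exists k m x).2 h⟩)

lemma sigma_horn (k : Fin (n + 1)) (m : SimplexCategoryᵒᵖ) (h : (Δ[n+1] : SSet.{u}).obj m) :
    InCorner n k.1 (sigmaApp.{u} n k m h) ↔
      Set.range (stdSimplex.asOrderHom h) ∪ {k.succ} ≠ Set.univ := by
  rw [Set.ne_univ_iff_exists_notMem]
  simp only [Set.mem_union, Set.mem_range, Set.mem_singleton_iff, not_or, not_exists]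
  have hk2 := k.2
  constructor
  · rintro (hs | hg | ⟨i, h1, h2, h3⟩)
    · simp only [Function.Surjective, not_forall] at hs
      obtain ⟨b, hb⟩ := hs
      rw [not_exists] at hb
      have hb' : ∀ a, ¬ ((sOrd n k (stdSimplex.asOrderHom h a)).1 = b.1) := fun a hval =>
        hb a (Fin.ext hval)
      have hbval := b.2
      rcases Nat.lt_or_ge b.1 k.1 with hbk | hbk
      · refine ⟨⟨b.1, by omega⟩, fun a ha => ?_, fun e => ?_⟩
        · have ha2 : (stdSimplex.asOrderHom h a).1 = b.1 := congrArg Fin.val ha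
          have := hb' a
          rw [sOrd_val] at this
          split_ifs at this <;> omega
        · have : b.1 = k.1 + 1 := congrArg Fin.val e
          omega
      · rcases Nat.eq_or_lt_of_le hbk with hbe | hbl
        · refine ⟨⟨k.1, by omega⟩, fun a ha => ?_, fun e => ?_⟩
          · have ha2 : (stdSimplex.asOrderHom h a).1 = k.1 := congrArg Fin.val ha
            have := hb' a
            rw [sOrd_val] at this
            split_ifs at this <;> omega
          · have : k.1 = k.1 + 1 := congrArg Fin.val e
            omega
        · refine ⟨⟨b.1 + 1, by omega⟩, fun a ha => ?_, fun e => ?_⟩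
          · have ha2 : (stdSimplex.asOrderHom h a).1 = b.1 + 1 := congrArg Fin.val ha
            have := hb' a
            rw [sOrd_val] at this
            split_ifs at this <;> omega
          · have : b.1 + 1 = k.1 + 1 := congrArg Fin.val e
            omega
    · refine ⟨⟨k.1, by omega⟩, fun a ha => ?_, fun e => ?_⟩
      · have ha2 : (stdSimplex.asOrderHom h a).1 = k.1 := congrArg Fin.val ha
        have hga : (tOrd n k (stdSimplex.asOrderHom h a)).1 = 1 := hg a
        rw [tOrd_val] at hga
        split_ifs at hga <;> omega
      · have : k.1 = k.1 + 1 := congrArg Fin.val e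
        omega
    · refine ⟨⟨i + 1, by omega⟩, fun a ha => ?_, fun e => ?_⟩
      · have ha2 : (stdSimplex.asOrderHom h a).1 = i + 1 := congrArg Fin.val ha
        have h3a1 := (h3 a).1
        have h3a2 := (h3 a).2
        rw [sigmaApp_fst, sigmaApp_snd, sOrd_val, tOrd_val] at h3a1 h3a2
        split_ifs at h3a1 h3a2 <;> omega
      · have : i + 1 = k.1 + 1 := congrArg Fin.val e
        omega
  · rintro ⟨j, hjr, hjk⟩
    have hj2 := j.2
    have hjk' : ¬ (j.1 = k.1 + 1) := fun e => hjk (Fin.ext e)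
    have hjr' : ∀ a, ¬ ((stdSimplex.asOrderHom h a).1 = j.1) := fun a e => hjr a (Fin.ext e)
    rcases Nat.lt_or_ge j.1 k.1 with hlt | hge
    · refine Or.inl fun hs => ?_
      obtain ⟨a, ha⟩ := hs ⟨j.1, by omega⟩
      have ha2 : (sOrd n k (stdSimplex.asOrderHom h a)).1 = j.1 := congrArg Fin.val ha
      have := hjr' a
      rw [sOrd_val] at ha2
      split_ifs at ha2 <;> omega
    · rcases Nat.eq_or_lt_of_le hge with heq | hgt
      · rcases Nat.eq_zero_or_pos k.1 with hk0 | hkpos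
        · refine Or.inr (Or.inl fun a => ?_)
          have := hjr' a
          rw [sigmaApp_snd, tOrd_val]
          split_ifs <;> omega
        · refine Or.inr (Or.inr ⟨k.1 - 1, by omega, by omega, fun a => ?_⟩)
          have hja := hjr' a
          have h2 := (stdSimplex.asOrderHom h a).2
          rw [sigmaApp_fst, sigmaApp_snd, sOrd_val, tOrd_val]
          constructor <;> intro hgg <;> split_ifs at hgg ⊢ <;> omega
      · refine Or.inl fun hs => ?_
        obtain ⟨a, ha⟩ := hs ⟨j.1 - 1, by omega⟩
        have ha2 : (sOrd n k (stdSimplex.asOrderHom h a)).1 = j.1 - 1 := congrArg Fin.val ha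
        have := hjr' a
        rw [sOrd_val] at ha2
        split_ifs at ha2 <;> omega

end Combinatorics

section Glue

variable {H A D W : SSet.{u}} {t : H ⟶ A} {i : H ⟶ D} {u : A ⟶ W} {v : D ⟶ W}

open Classical in
private noncomputable def descFun (u : A ⟶ W) (v : D ⟶ W)
    (hcov : ∀ m w, (∃ a, u.app m a = w) ∨ (∃ d, v.app m d = w))
    (s : PushoutCocone t i) (m : SimplexCategoryᵒᵖ) (w : W.obj m) : s.pt.obj m :=
  if hw : ∃ a, u.app m a = w then s.inl.app m hw.choose
  else s.inr.app m ((hcov m w).resolve_left hw).choose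

/-- A concrete criterion for a square of simplicial sets to be a pushout:
`W` is covered by the (objectwise injective) images of `A` and `D`, and the
intersection is exactly the image of `H`. -/
lemma isPushout_of_cover (t : H ⟶ A) (i : H ⟶ D) (u : A ⟶ W) (v : D ⟶ W)
    (comm : t ≫ u = i ≫ v)
    (hu : ∀ m, Function.Injective (u.app m))
    (hv : ∀ m, Function.Injective (v.app m))
    (hcov : ∀ m w, (∃ a, u.app m a = w) ∨ (∃ d, v.app m d = w))
    (hint : ∀ m (d : D.obj m) (a : A.obj m), v.app m d = u.app m a →
      ∃ h, i.app m h = d ∧ t.app m h = a) :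
    IsPushout t i u v := by
  classical
  have key : ∀ (s : PushoutCocone t i) m (a : A.obj m) (d : D.obj m),
      u.app m a = v.app m d → s.inl.app m a = s.inr.app m d := by
    intro s m a d e
    obtain ⟨h, hi, ht⟩ := hint m d a e.symm
    have hcond := congrArg (fun (f : H ⟶ s.pt) => f.app m h) s.condition
    dsimp at hcond
    rw [← ht, ← hi]
    exact hcond
  have descu : ∀ (s : PushoutCocone t i) m (a : A.obj m),
      descFun u v hcov s m (u.app m a) = s.inl.app m a := by
    intro s m a
    rw [descFun, dif_pos ⟨a, rfl⟩]
    exact congrArg (s.inl.app m) (hu m (⟨a, rfl⟩ : ∃ a', u.app m a' = u.app m a).choose_spec)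
  have descv : ∀ (s : PushoutCocone t i) m (d : D.obj m),
      descFun u v hcov s m (v.app m d) = s.inr.app m d := by
    intro s m d
    by_cases hw : ∃ a, u.app m a = v.app m d
    · rw [descFun, dif_pos hw]
      exact key s m _ _ hw.choose_spec
    · rw [descFun, dif_neg hw]
      exact congrArg (s.inr.app m) (hv m (((hcov m _).resolve_left hw).choose_spec))
  have descNat : ∀ (s : PushoutCocone t i) {m m' : SimplexCategoryᵒᵖ} (φ : m ⟶ m') (w : W.obj m),
      descFun u v hcov s m' (W.map φ w) = s.pt.map φ (descFun u v hcov s m w) := by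
    intro s m m' φ w
    rcases hcov m w with ⟨a, rfl⟩ | ⟨d, rfl⟩
    · have h1 : W.map φ (u.app m a) = u.app m' (A.map φ a) :=
        (types_congr_hom (u.naturality φ) a).symm
      rw [h1, descu, descu]
      exact (types_congr_hom (s.inl.naturality φ) a)
    · have h1 : W.map φ (v.app m d) = v.app m' (D.map φ d) :=
        (types_congr_hom (v.naturality φ) d).symm
      rw [h1, descv, descv]
      exact (types_congr_hom (s.inr.naturality φ) d)
  refine IsPushout.of_isColimit (PushoutCocone.IsColimit.mk comm
    (fun s => { app := fun m => TypeCat.ofHom fun w => descFun u v hcov s m w,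
                naturality := fun m m' φ => by ext w; exact descNat s φ w })
    (fun s => ?_) (fun s => ?_) (fun s f hl hr => ?_))
  · exact SSet.hom_ext fun m => by ext a; exact descu s m a
  · exact SSet.hom_ext fun m => by ext d; exact descv s m d
  · apply SSet.hom_ext
    intro m
    ext w
    rcases hcov m w with ⟨a, rfl⟩ | ⟨d, rfl⟩
    · have h2 := congrArg (fun (g : A ⟶ s.pt) => g.app m a) hl
      simp only [FunctorToTypes.comp] at h2
      exact h2.trans (descu s m a).symm
    · have h2 := congrArg (fun (g : D ⟶ s.pt) => g.app m d) hr
      simp only [FunctorToTypes.comp] at h2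
      exact h2.trans (descv s m d).symm

end Glue

section Squares

variable (n : ℕ)

def hornToCorner (k : Fin (n + 1)) : (Λ[n+1, k.succ] : SSet.{u}) ⟶ cornerSet.{u} n k.1 where
  app m := TypeCat.ofHom fun α => ⟨sigmaApp.{u} n k m α.1, (sigma_horn k m α.1).2 α.2⟩
  naturality m m' φ := by
    ext α
    apply Subtype.ext
    exact types_congr_hom ((sigmaMap.{u} n k).naturality φ) α.1

def sigmaBar (k : Fin (n + 1)) : (Δ[n+1] : SSet.{u}) ⟶ cornerSet.{u} n (k.1 + 1) where
  app m := TypeCat.ofHom fun h => ⟨sigmaApp.{u} n k m h, (inCorner_succ k m _).2 (Or.inr ⟨h, rfl⟩)⟩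
  naturality m m' φ := by
    ext h
    apply Subtype.ext
    exact types_congr_hom ((sigmaMap.{u} n k).naturality φ) h

lemma stepPushout (k : Fin (n + 1)) :
    IsPushout (hornToCorner.{u} n k) ((SSet.horn (n+1) k.succ).ι)
      (chain.{u} n (Nat.le_succ k.1)) (sigmaBar.{u} n k) := by
  apply isPushout_of_cover
  · apply SSet.hom_ext
    intro m
    ext α
    exact Subtype.ext rfl
  · intro m x y e
    have e' := congrArg Subtype.val e
    exact Subtype.ext e'
  · intro m h h' e
    exact sigma_inj k m h h' (congrArg Subtype.val e)
  · intro m w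
    rcases (inCorner_succ k m w.1).1 w.2 with hc | ⟨h, hh⟩
    · exact Or.inl ⟨⟨w.1, hc⟩, Subtype.ext rfl⟩
    · exact Or.inr ⟨h, Subtype.ext hh⟩
  · intro m d a e
    have e1 : sigmaApp.{u} n k m d = a.1 := congrArg Subtype.val e
    have hd : InCorner n k.1 (sigmaApp.{u} n k m d) := e1 ▸ a.2
    exact ⟨⟨d, (sigma_horn k m d).1 hd⟩, rfl, Subtype.ext e1⟩

def vertexOne (m : SimplexCategoryᵒᵖ) : (Δ[1] : SSet.{u}).obj m :=
  stdSimplex.objMk (OrderHom.const _ 1)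

lemma vertexMap_app (m : SimplexCategoryᵒᵖ) (y : (Δ[0] : SSet.{u}).obj m) :
    (vertexMap.{u} 1).app m y = vertexOne.{u} m :=
  deltaEq _ _ fun _ => rfl

def baseA : (∂Δ[n] ⊗ Δ[1] : SSet.{u}) ⟶ cornerSet.{u} n 0 where
  app m := TypeCat.ofHom fun p => ⟨(p.1.1, p.2), Or.inl p.1.2⟩
  naturality m m' φ := by
    ext p
    exact Subtype.ext rfl

def baseB : (Δ[n] ⊗ Δ[0] : SSet.{u}) ⟶ cornerSet.{u} n 0 where
  app m := TypeCat.ofHom fun p => ⟨(p.1, vertexOne.{u} m), Or.inr (Or.inl fun a => rfl)⟩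
  naturality m m' φ := by
    ext p
    exact Subtype.ext (Prod.ext rfl (deltaEq _ _ fun i => rfl))

instance subsingletonDelta0 (m : SimplexCategoryᵒᵖ) :
    Subsingleton ((Δ[0] : SSet.{u}).obj m) :=
  ⟨fun a b => deltaEq a b fun i => by
    have h1 := (stdSimplex.asOrderHom a i).2
    have h2 := (stdSimplex.asOrderHom b i).2
    exact Fin.ext (by omega)⟩

lemma basePushout :
    IsPushout ((∂Δ[n] : SSet.{u}) ◁ vertexMap 1) ((boundary n).ι ▷ Δ[0])
      (baseA.{u} n) (baseB.{u} n) := by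
  apply isPushout_of_cover
  · apply SSet.hom_ext
    intro m
    ext p
    exact Subtype.ext (Prod.ext rfl (vertexMap_app m p.2))
  · intro m p q e
    have e' : ((p.1.1 : (Δ[n] : SSet.{u}).obj m), p.2) = (q.1.1, q.2) := congrArg Subtype.val e
    obtain ⟨e1, e2⟩ := Prod.ext_iff.mp e'
    exact Prod.ext (Subtype.ext e1) e2
  · intro m p q e
    have e' : ((p.1 : (Δ[n] : SSet.{u}).obj m), vertexOne.{u} m) = (q.1, vertexOne.{u} m) :=
      congrArg Subtype.val e
    obtain ⟨e1, -⟩ := Prod.ext_iff.mp e'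
    exact Prod.ext e1 (Subsingleton.elim _ _)
  · intro m w
    rcases w.2 with hs | hg | ⟨i, hi, _⟩
    · exact Or.inl ⟨(⟨w.1.1, hs⟩, w.1.2), Subtype.ext rfl⟩
    · refine Or.inr ⟨(w.1.1, stdSimplex.objMk (OrderHom.const _ 0)), Subtype.ext ?_⟩
      exact Prod.ext rfl (deltaEq _ _ fun a => Fin.ext (hg a).symm)
    · exact absurd hi (by omega)
  · intro m d a e
    have e' : ((d.1 : (Δ[n] : SSet.{u}).obj m), vertexOne.{u} m) = (a.1.1, a.2) :=
      congrArg Subtype.val e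
    obtain ⟨e1, e2⟩ := Prod.ext_iff.mp e'
    refine ⟨(⟨d.1, e1 ▸ a.1.2⟩, d.2), rfl, ?_⟩
    exact Prod.ext (Subtype.ext e1) ((vertexMap_app m d.2).trans e2)

lemma isIso_cornerIncl_top : IsIso (cornerIncl.{u} n (n + 1)) := by
  have : ∀ m, IsIso ((cornerIncl.{u} n (n + 1)).app m) := by
    intro m
    rw [CategoryTheory.isIso_iff_bijective]
    exact ⟨fun x y e => Subtype.ext e, fun x => ⟨⟨x, inCorner_top m x⟩, rfl⟩⟩
  exact NatIso.isIso_of_isIso_app _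

end Squares

section Assemble

variable (n : ℕ)

def q0 : boundaryCorner.{u} n 1 ⟶ cornerSet.{u} n 0 :=
  (basePushout.{u} n).isoPushout.inv

lemma bc_eq : boundaryCornerIncl.{u} n 1 = q0.{u} n ≫ cornerIncl.{u} n 0 := by
  unfold boundaryCornerIncl q0
  apply pushout.hom_ext
  · rw [pushout.inl_desc]
    erw [IsPushout.inl_isoPushout_inv_assoc]
    apply SSet.hom_ext
    intro m
    ext p
    rfl
  · rw [pushout.inr_desc]
    erw [IsPushout.inr_isoPushout_inv_assoc]
    apply SSet.hom_ext
    intro m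
    ext p
    exact Prod.ext rfl (vertexMap_app m p.2).symm

def topIso : cornerSet.{u} n (n + 1) ≅ prism.{u} n :=
  have := isIso_cornerIncl_top.{u} n
  asIso (cornerIncl.{u} n (n + 1))

lemma topIso_hom : (topIso.{u} n).hom = cornerIncl.{u} n (n + 1) := rfl

/-- The class of horn inclusions appearing in the statement. -/
abbrev SClass : MorphismProperty SSet.{u} := fun _ _ f =>
  ∃ k : Fin (n + 2), 0 < (k : ℕ) ∧ (k : ℕ) ≤ n + 1 ∧
    Arrow.mk f = Arrow.mk ((SSet.horn (n + 1) k).ι)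

lemma sclass_horn (k : Fin (n + 1)) : SClass.{u} n ((SSet.horn (n+1) k.succ).ι) :=
  ⟨k.succ, by simp [Fin.val_succ], by have := k.2; simp [Fin.val_succ]; omega, rfl⟩

lemma pushoutOfMem_first (hn : 0 < n) :
    IsPushoutOfMem (SClass.{u} n)
      (q0.{u} n ≫ chain.{u} n (Nat.le_succ 0)) :=
  ⟨_, _, (SSet.horn (n+1) (⟨0, by omega⟩ : Fin (n+1)).succ).ι,
    hornToCorner.{u} n ⟨0, by omega⟩ ≫ (basePushout.{u} n).isoPushout.hom,
    sigmaBar.{u} n ⟨0, by omega⟩, sclass_horn n _,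
    (stepPushout.{u} n ⟨0, by omega⟩).of_iso (Iso.refl _)
      ((basePushout.{u} n).isoPushout) (Iso.refl _) (Iso.refl _)
      (by simp) (by simp) (by simp [q0]; exact (Iso.hom_inv_id_assoc _ _).symm)
        (by exact (Category.comp_id _).trans (Category.id_comp _).symm)⟩

lemma pushoutOfMem_mid (k : Fin (n + 1)) :
    IsPushoutOfMem (SClass.{u} n) (chain.{u} n (Nat.le_succ k.1)) :=
  ⟨_, _, (SSet.horn (n+1) k.succ).ι, hornToCorner.{u} n k, sigmaBar.{u} n k,
    sclass_horn n k, stepPushout.{u} n k⟩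

lemma pushoutOfMem_last :
    IsPushoutOfMem (SClass.{u} n)
      (chain.{u} n (Nat.le_succ n) ≫ (topIso.{u} n).hom) :=
  ⟨_, _, (SSet.horn (n+1) (⟨n, by omega⟩ : Fin (n+1)).succ).ι,
    hornToCorner.{u} n ⟨n, by omega⟩,
    sigmaBar.{u} n ⟨n, by omega⟩ ≫ (topIso.{u} n).hom, sclass_horn n _,
    (stepPushout.{u} n ⟨n, by omega⟩).of_iso (Iso.refl _) (Iso.refl _) (Iso.refl _)
      (topIso.{u} n) (by simp) (by simp) (by simp) (by simp)⟩

lemma pushoutOfMem_single (hn : n = 0) :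
    IsPushoutOfMem (SClass.{u} n) (boundaryCornerIncl.{u} n 1) := by
  subst hn
  exact ⟨_, _, (SSet.horn 1 (⟨0, by omega⟩ : Fin 1).succ).ι,
    hornToCorner.{u} 0 ⟨0, by omega⟩ ≫ (basePushout.{u} 0).isoPushout.hom,
    sigmaBar.{u} 0 ⟨0, by omega⟩ ≫ (topIso.{u} 0).hom, sclass_horn 0 _,
    (stepPushout.{u} 0 ⟨0, by omega⟩).of_iso (Iso.refl _)
      ((basePushout.{u} 0).isoPushout) (Iso.refl _) (topIso.{u} 0)
      (by simp) (by simp)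
      (by rw [bc_eq, topIso_hom, ← chain_incl.{u} 0 (Nat.le_succ 0)]; simp [q0]; exact (Iso.hom_inv_id_assoc _ _).symm)
      (by simp)⟩

lemma mainFiniteComp : FiniteCompOfPushouts (SClass.{u} n) (boundaryCornerIncl.{u} n 1) := by
  match n with
  | 0 => exact .of _ (pushoutOfMem_single 0 rfl)
  | (m + 1) =>
    have P : ∀ j : ℕ, j + 1 ≤ m + 1 →
        FiniteCompOfPushouts (SClass.{u} (m + 1))
          (q0.{u} (m + 1) ≫ chain.{u} (m + 1) (Nat.zero_le (j + 1))) := by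
      intro j
      induction j with
      | zero => intro _; exact .of _ (pushoutOfMem_first (m + 1) (by omega))
      | succ i ih =>
          intro hij
          have h1 := FiniteCompOfPushouts.comp _ _ (ih (by omega))
            (pushoutOfMem_mid (m + 1) ⟨i + 1, by omega⟩)
          rw [Category.assoc, chain_chain] at h1
          exact h1
    have h2 := FiniteCompOfPushouts.comp _ _ (P m (by omega))
      (pushoutOfMem_last (m + 1))
    have e : (q0.{u} (m+1) ≫ chain.{u} (m+1) (Nat.zero_le (m+1))) ≫
        (chain.{u} (m+1) (Nat.le_succ (m+1)) ≫ (topIso.{u} (m+1)).hom) =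
        boundaryCornerIncl.{u} (m+1) 1 := by
      rw [bc_eq, topIso_hom]
      simp only [Category.assoc, chain_incl]
    rw [← e]
    exact h2

end Assemble


section Saturation

lemma cov01 : (0 : Fin 3) ⋖ 1 := by
  constructor
  · decide
  · intro c h1 h2
    rw [Fin.lt_def] at h1 h2
    omega

lemma cov12 : (1 : Fin 3) ⋖ 2 := by
  constructor
  · decide
  · intro c h1 h2
    rw [Fin.lt_def] at h1 h2
    omega

lemma comp_mem (W : MorphismProperty SSet.{u}) (ws : IsWeaklySaturated W)
    {A B C : SSet.{u}} (f : A ⟶ B) (g : B ⟶ C) (hf : W f) (hg : W g) : W (f ≫ g) := by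
  let F : Fin 3 ⥤ SSet.{u} := ComposableArrows.mk₂ f g
  have hmapf : F.map (homOfLE (show (0:Fin 3) ≤ 1 by decide)) = f := rfl
  have hmapg : F.map (homOfLE (show (1:Fin 3) ≤ 2 by decide)) = g := rfl
  have hsucc : ∀ j : Fin 3, ¬ IsMax j → W (F.map (homOfLE (Order.le_succ j))) := by
    intro j hj
    rcases j with ⟨jv, hjv⟩
    interval_cases jv
    · show W (F.map (homOfLE (show (0:Fin 3) ≤ 1 by decide)))
      exact hmapf ▸ hf
    · show W (F.map (homOfLE (show (1:Fin 3) ≤ 2 by decide)))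
      exact hmapg ▸ hg
    · refine absurd (fun b hb => ?_) hj
      have hb' : (2 : ℕ) ≤ b.1 := hb
      have hb2 := b.2
      show b.1 ≤ 2
      omega
  have hlim : ∀ j : Fin 3, Order.IsSuccLimit j → Nonempty (IsColimit (coconeAt F j)) := by
    intro j hj
    exfalso
    obtain ⟨h1, h2⟩ := hj
    rcases j with ⟨jv, hjv⟩
    interval_cases jv
    · exact h1 fun b hb => Fin.zero_le _
    · exact h2 0 cov01
    · exact h2 1 cov12
  let c : Cocone F :=
    { pt := F.obj (Fin.last 2)
      ι :=
        { app := fun j => F.map (homOfLE (Fin.le_last j))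
          naturality := fun j j' φ => by
            dsimp
            rw [Category.comp_id, ← F.map_comp]
            exact congrArg F.map (Subsingleton.elim _ _) } }
  have hc : IsColimit c :=
    { desc := fun s => s.ι.app (Fin.last 2)
      fac := fun s j => by
        have h3 := s.ι.naturality (homOfLE (Fin.le_last j))
        dsimp at h3
        rw [Category.comp_id] at h3
        exact h3
      uniq := fun s mdesc hm => by
        have h4 := hm (Fin.last 2)
        have h5 : c.ι.app (Fin.last 2) = 𝟙 (F.obj (Fin.last 2)) :=
          (congrArg F.map (Subsingleton.elim (homOfLE (Fin.le_last (Fin.last 2)))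
            (𝟙 (Fin.last 2)))).trans (F.map_id _)
        show mdesc = s.ι.app (Fin.last 2)
        calc mdesc = c.ι.app (Fin.last 2) ≫ mdesc := by rw [h5, Category.id_comp]
        _ = s.ι.app (Fin.last 2) := h4 }
  haveI hwf : WellFoundedLT (Fin 3) := inferInstance
  have hW := @IsWeaklySaturated.transfinite _ ws (Fin 3) _ _ _ hwf F hsucc hlim c hc
  have e : c.ι.app ⊥ = f ≫ g := by
    show F.map (homOfLE (Fin.le_last (⊥ : Fin 3))) = f ≫ g
    rw [show (homOfLE (Fin.le_last (⊥ : Fin 3))) =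
      homOfLE (show (0:Fin 3) ≤ 1 by decide) ≫ homOfLE (show (1:Fin 3) ≤ 2 by decide) from
      Subsingleton.elim _ _, F.map_comp, hmapf, hmapg]
    rfl
  rw [e] at hW
  exact hW

lemma finiteComp_rightAnodyne {S : MorphismProperty SSet.{u}}
    (hS : ∀ {X Y : SSet.{u}} (g : X ⟶ Y), S g → RightHornIncls.{u} g)
    {A B : SSet.{u}} {f : A ⟶ B} (hf : FiniteCompOfPushouts S f) : RightAnodyne f := by
  induction hf with
  | of f h =>
      intro W ws hW
      obtain ⟨X, Y, g, t, b, hg, hpo⟩ := h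
      exact ws.pushout hpo (hW g (hS g hg))
  | comp f g hf' hpo ih =>
      intro W ws hW
      obtain ⟨X, Y, g', t, b, hg', hpo'⟩ := hpo
      exact comp_mem W ws f g (ih W ws hW) (ws.pushout hpo' (hW g' (hS g' hg')))

end Saturation

end BCPrism
end

/-- For every `n ≥ 0`, the inclusion `(∂Δ[n] × Δ[1]) ∪ (Δ[n] × {1}) → Δ[n] × Δ[1]` is a
finite composition of pushouts of horn inclusions `Λ[n+1, k] → Δ[n+1]` with
`0 < k ≤ n + 1`; in particular, it is a right anodyne extension. -/
theorem boundaryCornerIncl_one_finiteCompOfPushouts_and_rightAnodyne (n : ℕ) :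
    FiniteCompOfPushouts
      (fun _ _ f => ∃ k : Fin (n + 2), 0 < (k : ℕ) ∧ (k : ℕ) ≤ n + 1 ∧
        Arrow.mk f = Arrow.mk ((SSet.horn (n + 1) k).ι))
      (boundaryCornerIncl.{u} n 1) ∧
    RightAnodyne (boundaryCornerIncl.{u} n 1) := by
  constructor
  · exact BCPrism.mainFiniteComp.{u} n
  · exact BCPrism.finiteComp_rightAnodyne
      (fun g hg => by obtain ⟨k, h1, h2, h3⟩ := hg; exact ⟨n + 1, k, h1, h2, h3⟩)
      (BCPrism.mainFiniteComp.{u} n)
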